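/- For every δ ∈ (0,1) there exists a constant C = C(δ) > 0 such that for every integer n ≥ 1, (1/A_n^δ) · ∫_{Γ₂} u1 · | Σ_{k=0}^{n} A_{n−k}^{δ−1} · D*_k(u1,u2) | du1 du2 ≤ C · log(n+1)/(n+1)^δ, where Γ₂ = {(u1,u2) ∈ Γ : u1 ≥ 1/(n+1), u2 ≤ 1/(3(n+1))}. -/

import Mathlib

open MeasureTheory Finset

/-- The triangle `Γ = {(u₁,u₂) : 0 ≤ u₂ ≤ u₁/3, 0 ≤ u₁ ≤ 1}`. -/
def GammaT : Set (ℝ × ℝ) := {u | 0 ≤ u.2 ∧ u.2 ≤ u.1 / 3 ∧ 0 ≤ u.1 ∧ u.1 ≤ 1}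

open Finset in
/-- Cesàro numbers: `A_n^δ = (δ+1)(δ+2)⋯(δ+n)/n!`, with `A_0^δ = 1`. -/
noncomputable def cesaroA (δ : ℝ) (n : ℕ) : ℝ :=
  (∏ i ∈ Finset.range n, (δ + i + 1)) / n.factorial

/-- The transformed hexagonal Dirichlet kernel `D*_k`. -/
noncomputable def DstarK (k : ℕ) (u : ℝ × ℝ) : ℝ :=
  (Real.sin (((k : ℝ) + 1) * Real.pi * u.2) *
      Real.sin (((k : ℝ) + 1) * Real.pi * (u.1 + u.2) / 2) *
      Real.sin (((k : ℝ) + 1) * Real.pi * (u.1 - u.2) / 2) -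
    Real.sin ((k : ℝ) * Real.pi * u.2) *
      Real.sin ((k : ℝ) * Real.pi * (u.1 + u.2) / 2) *
      Real.sin ((k : ℝ) * Real.pi * (u.1 - u.2) / 2)) /
    (Real.sin (Real.pi * u.2) * Real.sin (Real.pi * (u.1 + u.2) / 2) *
      Real.sin (Real.pi * (u.1 - u.2) / 2))

noncomputable def Fm (x y : ℝ) (m : ℕ) : ℝ :=
  Real.sin (m * Real.pi * y) * Real.sin (m * Real.pi * (x + y) / 2) *
    Real.sin (m * Real.pi * (x - y) / 2)

noncomputable def Dden (x y : ℝ) : ℝ :=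
  Real.sin (Real.pi * y) * Real.sin (Real.pi * (x + y) / 2) *
    Real.sin (Real.pi * (x - y) / 2)

lemma cesaro_zero (ε : ℝ) : cesaroA ε 0 = 1 := by simp [cesaroA]

lemma cesaro_succ (ε : ℝ) (m : ℕ) :
    cesaroA ε (m + 1) = cesaroA ε m * (ε + m + 1) / (m + 1) := by
  have h : (m.factorial : ℝ) ≠ 0 := by exact_mod_cast m.factorial_pos.ne'
  have h2 : ((m : ℝ) + 1) ≠ 0 := by positivity
  unfold cesaroA
  rw [Finset.prod_range_succ, Nat.factorial_succ]
  push_cast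
  field_simp

lemma cesaro_shift (ε : ℝ) (m : ℕ) :
    cesaroA (ε - 1) (m + 1) = cesaroA ε m * ε / (m + 1) := by
  have h : (m.factorial : ℝ) ≠ 0 := by exact_mod_cast m.factorial_pos.ne'
  have h2 : ((m : ℝ) + 1) ≠ 0 := by positivity
  unfold cesaroA
  rw [Finset.prod_range_succ', Nat.factorial_succ]
  have : ∀ i ∈ Finset.range m, (ε - 1 + (↑(i + 1) : ℝ) + 1) = ε + i + 1 := by
    intro i _; push_cast; ring
  rw [Finset.prod_congr rfl this]
  push_cast
  field_simp
  ring_nf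

lemma cesaro_diff (ε : ℝ) (m : ℕ) :
    cesaroA ε (m + 1) - cesaroA ε m = cesaroA (ε - 1) (m + 1) := by
  have h2 : ((m : ℝ) + 1) ≠ 0 := by positivity
  rw [cesaro_succ, cesaro_shift]
  field_simp
  ring

lemma cesaro_sum (ε : ℝ) (N : ℕ) :
    ∑ j ∈ Finset.range (N + 1), cesaroA (ε - 1) j = cesaroA ε N := by
  induction N with
  | zero => simp [cesaroA]
  | succ n ih =>
      rw [Finset.sum_range_succ, ih]
      linarith [cesaro_diff ε n]

lemma cesaro_nonneg {ε : ℝ} (hε : -1 ≤ ε) (n : ℕ) : 0 ≤ cesaroA ε n := by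
  unfold cesaroA
  apply div_nonneg _ (Nat.cast_nonneg _)
  apply Finset.prod_nonneg
  intro i _
  have : (0:ℝ) ≤ i := Nat.cast_nonneg i
  linarith

lemma cesaro2_nonpos {δ : ℝ} (h0 : 0 < δ) (h1 : δ < 1) (m : ℕ) :
    cesaroA (δ - 2) (m + 1) ≤ 0 := by
  unfold cesaroA
  apply div_nonpos_of_nonpos_of_nonneg _ (Nat.cast_nonneg _)
  rw [Finset.prod_range_succ']
  have hprod : (0:ℝ) ≤ ∏ i ∈ Finset.range m, (δ - 2 + (↑(i + 1) : ℝ) + 1) := by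
    apply Finset.prod_nonneg
    intro i _
    have : (0:ℝ) ≤ i := Nat.cast_nonneg i
    push_cast
    linarith
  have h00 : (δ - 2 + ((0:ℕ) : ℝ) + 1) ≤ 0 := by push_cast; linarith
  exact mul_nonpos_of_nonneg_of_nonpos hprod h00

lemma cesaro2_abs_sum {δ : ℝ} (h0 : 0 < δ) (h1 : δ < 1) (N : ℕ) :
    ∑ m ∈ Finset.range N, |cesaroA (δ - 2) (m + 1)| ≤ 1 := by
  have habs : ∀ m ∈ Finset.range N, |cesaroA (δ - 2) (m + 1)| = -cesaroA (δ - 2) (m + 1) :=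
    fun m _ => abs_of_nonpos (cesaro2_nonpos h0 h1 m)
  rw [Finset.sum_congr rfl habs, Finset.sum_neg_distrib]
  have hsum : ∑ j ∈ Finset.range (N + 1), cesaroA (δ - 2) j = cesaroA (δ - 1) N := by
    have := cesaro_sum (δ - 1) N
    rw [show δ - 1 - 1 = δ - 2 by ring] at this
    exact this
  rw [Finset.sum_range_succ'] at hsum
  have h0' : cesaroA (δ - 2) 0 = 1 := cesaro_zero _
  have hnn : 0 ≤ cesaroA (δ - 1) N := cesaro_nonneg (by linarith) N
  linarith [hsum, h0']

lemma telescope (n : ℕ) : (∏ i ∈ Finset.range n, (((i : ℝ) + 2) / ((i : ℝ) + 1))) = (n : ℝ) + 1 := by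
  induction n with
  | zero => simp
  | succ m ih =>
      rw [Finset.prod_range_succ, ih]
      have : ((m : ℝ) + 1) ≠ 0 := by positivity
      push_cast
      field_simp
      ring

lemma cesaro_lower {δ : ℝ} (h0 : 0 ≤ δ) (h1 : δ ≤ 1) (n : ℕ) :
    ((n : ℝ) + 1) ^ δ ≤ cesaroA δ n := by
  have hfac : (n.factorial : ℝ) = ∏ i ∈ Finset.range n, ((i : ℝ) + 1) := by
    rw [← Finset.prod_range_add_one_eq_factorial]
    push_cast
    rfl
  have hA : cesaroA δ n = ∏ i ∈ Finset.range n, ((δ + i + 1) / ((i : ℝ) + 1)) := by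
    rw [cesaroA, hfac, ← Finset.prod_div_distrib]
  have htel := telescope n
  have hrw : ((n : ℝ) + 1) ^ δ = ∏ i ∈ Finset.range n, (((i : ℝ) + 2) / ((i : ℝ) + 1)) ^ δ := by
    rw [Real.finset_prod_rpow _ _ (fun i _ => by positivity) δ, htel]
  rw [hA, hrw]
  apply Finset.prod_le_prod (fun i _ => by positivity)
  intro i _
  have hi : (0 : ℝ) < (i : ℝ) + 1 := by positivity
  have hs : ((i : ℝ) + 2) / ((i : ℝ) + 1) = 1 + 1 / ((i : ℝ) + 1) := by field_simp; ring
  have hb := rpow_one_add_le_one_add_mul_self (s := 1 / ((i : ℝ) + 1))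
    (le_trans (by norm_num : (-1:ℝ) ≤ 0) (by positivity)) h0 h1
  rw [hs]
  refine hb.trans ?_
  rw [le_div_iff₀ hi]
  have hq : (1 + δ * (1 / ((i:ℝ)+1))) * ((i:ℝ)+1) = (i:ℝ) + 1 + δ := by field_simp
  rw [hq]
  linarith

lemma key_sin {t : ℝ} (h0 : 0 ≤ t) (h1 : t ≤ 2 / 3) : t ≤ Real.sin (Real.pi * t) := by
  have hpi := Real.pi_pos
  have hcc := strictConcaveOn_sin_Icc.concaveOn
  have h := hcc.2 (show (0:ℝ) ∈ Set.Icc 0 Real.pi from ⟨le_rfl, hpi.le⟩)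
    (show 2 * Real.pi / 3 ∈ Set.Icc 0 Real.pi from ⟨by positivity, by linarith⟩)
    (show (0:ℝ) ≤ 1 - 3 * t / 2 by linarith) (show (0:ℝ) ≤ 3 * t / 2 by linarith)
    (show (1 - 3 * t / 2) + 3 * t / 2 = 1 by ring)
  have harg : (1 - 3 * t / 2) • (0 : ℝ) + (3 * t / 2) • (2 * Real.pi / 3) = Real.pi * t := by
    simp [smul_eq_mul]; ring
  rw [harg] at h
  have hsin23 : Real.sin (2 * Real.pi / 3) = Real.sqrt 3 / 2 := by
    rw [show (2 * Real.pi / 3 : ℝ) = Real.pi - Real.pi / 3 by ring, Real.sin_pi_sub,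
      Real.sin_pi_div_three]
  rw [Real.sin_zero, hsin23, smul_eq_mul, smul_eq_mul, mul_zero, zero_add] at h
  have hsq : (4 : ℝ) / 3 ≤ Real.sqrt 3 := by
    nlinarith [Real.sq_sqrt (show (0:ℝ) ≤ 3 by norm_num), Real.sqrt_nonneg 3]
  nlinarith [h]

lemma DstarK_eq (k : ℕ) (x y : ℝ) :
    DstarK k (x, y) = (Fm x y (k + 1) - Fm x y k) / Dden x y := by
  simp only [DstarK, Fm, Dden]
  push_cast
  ring_nf


lemma sum_bound {δ : ℝ} (h0 : 0 < δ) (h1 : δ < 1) (n : ℕ) (x y : ℝ)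
    (hx0 : 0 < x) (hx1 : x ≤ 1) (hy0 : 0 ≤ y) (hy3 : y ≤ x / 3) :
    |∑ k ∈ Finset.range (n + 1), cesaroA (δ - 1) (n - k) * DstarK k (x, y)| ≤
      12 * Real.pi * ((n : ℝ) + 1) / x ^ 2 := by
  have hpi := Real.pi_pos
  have hrw : ∀ k ∈ Finset.range (n + 1), cesaroA (δ - 1) (n - k) * DstarK k (x, y) =
      (cesaroA (δ - 1) (n - k) * (Fm x y (k + 1) - Fm x y k)) / Dden x y := by
    intro k _; rw [DstarK_eq]; ring
  rw [Finset.sum_congr rfl hrw, ← Finset.sum_div]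
  set T := ∑ k ∈ Finset.range (n + 1), cesaroA (δ - 1) (n - k) * (Fm x y (k + 1) - Fm x y k)
    with hT
  -- Abel summation
  have habel : T = (∑ j ∈ Finset.range n,
      (cesaroA (δ - 1) (n - j) - cesaroA (δ - 1) (n - (j + 1))) * Fm x y (j + 1))
      + Fm x y (n + 1) := by
    have e1 : T = (∑ k ∈ Finset.range (n + 1), cesaroA (δ - 1) (n - k) * Fm x y (k + 1)) -
        ∑ k ∈ Finset.range (n + 1), cesaroA (δ - 1) (n - k) * Fm x y k := by
      rw [← Finset.sum_sub_distrib]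
      exact Finset.sum_congr rfl fun k _ => by ring
    have e2 : ∑ j ∈ Finset.range n,
        (cesaroA (δ - 1) (n - j) - cesaroA (δ - 1) (n - (j + 1))) * Fm x y (j + 1)
        = (∑ k ∈ Finset.range n, cesaroA (δ - 1) (n - k) * Fm x y (k + 1)) -
          ∑ k ∈ Finset.range n, cesaroA (δ - 1) (n - (k + 1)) * Fm x y (k + 1) := by
      rw [← Finset.sum_sub_distrib]
      exact Finset.sum_congr rfl fun k _ => by ring
    have hF0 : Fm x y 0 = 0 := by simp [Fm]
    rw [e1, Finset.sum_range_succ,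
      Finset.sum_range_succ' (fun k => cesaroA (δ - 1) (n - k) * Fm x y k), e2,
      Nat.sub_self, cesaro_zero, hF0]
    ring
  -- bound on |Fm|
  have hFb : ∀ m : ℕ, m ≤ n + 1 → |Fm x y m| ≤ ((n : ℝ) + 1) * Real.pi * y := by
    intro m hm
    have h1' : |Fm x y m| ≤ |Real.sin (m * Real.pi * y)| := by
      rw [Fm, abs_mul, abs_mul]
      calc |Real.sin (m * Real.pi * y)| * |Real.sin (m * Real.pi * (x + y) / 2)| *
            |Real.sin (m * Real.pi * (x - y) / 2)|
          ≤ |Real.sin (m * Real.pi * y)| * 1 * 1 := by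
            gcongr <;> exact Real.abs_sin_le_one _
        _ = |Real.sin (m * Real.pi * y)| := by ring
    refine h1'.trans ?_
    have h2' : |Real.sin (m * Real.pi * y)| ≤ |m * Real.pi * y| := Real.abs_sin_le_abs
    refine h2'.trans ?_
    rw [abs_of_nonneg (by positivity)]
    have hm' : (m : ℝ) ≤ (n : ℝ) + 1 := by exact_mod_cast hm
    have : (m:ℝ) * Real.pi * y ≤ ((n:ℝ)+1) * Real.pi * y := by
      apply mul_le_mul_of_nonneg_right _ hy0
      exact mul_le_mul_of_nonneg_right hm' hpi.le
    exact this
  -- difference of Cesàro coefficients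
  have hdiffs : ∀ j ∈ Finset.range n,
      cesaroA (δ - 1) (n - j) - cesaroA (δ - 1) (n - (j + 1)) = cesaroA (δ - 2) (n - j) := by
    intro j hj
    have hj' : j < n := Finset.mem_range.1 hj
    have hnj : n - j = (n - (j + 1)) + 1 := by omega
    rw [hnj]
    have := cesaro_diff (δ - 1) (n - (j + 1))
    rw [show δ - 1 - 1 = δ - 2 by ring] at this
    exact this
  -- |T| bound
  have habsT : |T| ≤ 2 * Real.pi * ((n : ℝ) + 1) * y := by
    rw [habel]
    have hM : (0:ℝ) ≤ ((n : ℝ) + 1) * Real.pi * y := by positivity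
    calc |(∑ j ∈ Finset.range n,
            (cesaroA (δ - 1) (n - j) - cesaroA (δ - 1) (n - (j + 1))) * Fm x y (j + 1))
            + Fm x y (n + 1)|
        ≤ |∑ j ∈ Finset.range n,
            (cesaroA (δ - 1) (n - j) - cesaroA (δ - 1) (n - (j + 1))) * Fm x y (j + 1)|
            + |Fm x y (n + 1)| := abs_add_le _ _
      _ ≤ (∑ j ∈ Finset.range n, |cesaroA (δ - 2) (n - j)| * (((n : ℝ) + 1) * Real.pi * y))
            + ((n : ℝ) + 1) * Real.pi * y := by
            gcongr with j hj
            · refine (Finset.abs_sum_le_sum_abs _ _).trans ?_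
              apply Finset.sum_le_sum
              intro j hj
              rw [abs_mul, hdiffs j hj]
              exact mul_le_mul_of_nonneg_left (hFb (j + 1) (by
                have := Finset.mem_range.1 hj; omega)) (abs_nonneg _)
            · exact hFb (n + 1) le_rfl
      _ = (∑ j ∈ Finset.range n, |cesaroA (δ - 2) (n - j)|) * (((n : ℝ) + 1) * Real.pi * y)
            + ((n : ℝ) + 1) * Real.pi * y := by rw [Finset.sum_mul]
      _ ≤ 1 * (((n : ℝ) + 1) * Real.pi * y) + ((n : ℝ) + 1) * Real.pi * y := by
            gcongr
            have hre : ∀ j ∈ Finset.range n, |cesaroA (δ - 2) (n - j)| =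
                (fun m => |cesaroA (δ - 2) (m + 1)|) (n - 1 - j) := by
              intro j hj
              have := Finset.mem_range.1 hj
              simp only
              congr 2
              omega
            rw [Finset.sum_congr rfl hre]
            rw [Finset.sum_range_reflect (fun m => |cesaroA (δ - 2) (m + 1)|) n]
            simpa using cesaro2_abs_sum h0 h1 n
      _ = 2 * Real.pi * ((n : ℝ) + 1) * y := by ring
  -- now the denominator bound and conclusion
  rcases eq_or_lt_of_le hy0 with hy0' | hy0'
  · -- y = 0 : T = 0
    have hF0 : ∀ m : ℕ, Fm x y m = 0 := by
      intro m; rw [Fm, ← hy0', mul_zero, Real.sin_zero, zero_mul, zero_mul]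
    have hT0 : T = 0 := by
      rw [hT]
      apply Finset.sum_eq_zero
      intro k _
      rw [hF0, hF0, sub_zero, mul_zero]
    rw [hT0, zero_div, abs_zero]
    positivity
  · -- y > 0 : lower bound on Dden
    have hs1 : y ≤ Real.sin (Real.pi * y) := key_sin hy0 (by linarith)
    have hs2 : (x + y) / 2 ≤ Real.sin (Real.pi * (x + y) / 2) := by
      have := key_sin (t := (x + y) / 2) (by linarith) (by linarith)
      rwa [show Real.pi * ((x + y) / 2) = Real.pi * (x + y) / 2 by ring] at this
    have hs3 : (x - y) / 2 ≤ Real.sin (Real.pi * (x - y) / 2) := by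
      have := key_sin (t := (x - y) / 2) (by linarith) (by linarith)
      rwa [show Real.pi * ((x - y) / 2) = Real.pi * (x - y) / 2 by ring] at this
    have hDlow : x ^ 2 * y / 6 ≤ Dden x y := by
      have hstep : y * ((x + y) / 2) * ((x - y) / 2) ≤ Dden x y := by
        rw [Dden]
        have n1 : (0:ℝ) ≤ Real.sin (Real.pi * y) := le_trans hy0 hs1
        have n2 : (0:ℝ) ≤ Real.sin (Real.pi * (x + y) / 2) := le_trans (by linarith) hs2
        exact mul_le_mul (mul_le_mul hs1 hs2 (by linarith) n1) hs3 (by linarith)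
          (mul_nonneg n1 n2)
      nlinarith [mul_nonneg hy0 (sub_nonneg.2 hy3), sq_nonneg y, sq_nonneg (x - 3 * y)]
    have hDpos : 0 < Dden x y := lt_of_lt_of_le (by positivity) hDlow
    rw [abs_div, abs_of_pos hDpos]
    calc |T| / Dden x y ≤ (2 * Real.pi * ((n : ℝ) + 1) * y) / (x ^ 2 * y / 6) := by
          apply div_le_div₀ (by positivity) habsT (by positivity) hDlow
      _ = 12 * Real.pi * ((n : ℝ) + 1) / x ^ 2 := by
          field_simp
          ring


theorem stmt_16 :
    ∀ δ : ℝ, 0 < δ → δ < 1 → ∃ C : ℝ, 0 < C ∧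
      ∀ n : ℕ, 1 ≤ n →
        (1 / cesaroA δ n) *
            ∫ u in GammaT ∩
                {u : ℝ × ℝ | 1 / ((n : ℝ) + 1) ≤ u.1 ∧ u.2 ≤ 1 / (3 * ((n : ℝ) + 1))},
              u.1 * |∑ k ∈ Finset.range (n + 1), cesaroA (δ - 1) (n - k) * DstarK k u| ≤
          C * (Real.log (n + 1) / (n + 1 : ℝ) ^ δ) := by
  intro δ h0 h1
  refine ⟨4 * Real.pi, by positivity, ?_⟩
  intro n hn
  have hpi := Real.pi_pos
  have hn1 : (0:ℝ) < (n : ℝ) + 1 := by positivity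
  have hn2 : (1:ℝ) ≤ (n : ℝ) + 1 := by
    have : (1:ℝ) ≤ (n:ℝ) := by exact_mod_cast hn
    linarith
  set a : ℝ := 1 / ((n : ℝ) + 1) with ha
  set c : ℝ := 1 / (3 * ((n : ℝ) + 1)) with hc
  have ha0 : 0 < a := by positivity
  have hc0 : 0 < c := by positivity
  have ha1 : a ≤ 1 := by rw [ha, div_le_one hn1]; linarith
  set K : ℝ := 12 * Real.pi * ((n : ℝ) + 1) with hK
  have hK0 : 0 < K := by positivity
  set S : Set (ℝ × ℝ) := GammaT ∩ {u : ℝ × ℝ | a ≤ u.1 ∧ u.2 ≤ c} with hS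
  set E : Set (ℝ × ℝ) := Set.Icc a 1 ×ˢ Set.Icc (0:ℝ) c with hE
  have hSE : S ⊆ E := by
    rintro ⟨x, y⟩ ⟨⟨hy0, hy3, hx0, hx1⟩, hxa, hyc⟩
    exact ⟨⟨hxa, hx1⟩, ⟨hy0, hyc⟩⟩
  have hGmeas : MeasurableSet GammaT := by
    have : GammaT = {u : ℝ × ℝ | 0 ≤ u.2} ∩ ({u : ℝ × ℝ | u.2 ≤ u.1 / 3} ∩
        ({u : ℝ × ℝ | 0 ≤ u.1} ∩ {u : ℝ × ℝ | u.1 ≤ 1})) := by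
      ext u; simp [GammaT, and_assoc]
    rw [this]
    exact (measurableSet_le measurable_const measurable_snd).inter
      ((measurableSet_le measurable_snd (measurable_fst.div_const 3)).inter
        ((measurableSet_le measurable_const measurable_fst).inter
          (measurableSet_le measurable_fst measurable_const)))
  have hSmeas : MeasurableSet S := by
    apply hGmeas.inter
    have : {u : ℝ × ℝ | a ≤ u.1 ∧ u.2 ≤ c} =
        {u : ℝ × ℝ | a ≤ u.1} ∩ {u : ℝ × ℝ | u.2 ≤ c} := rfl
    rw [this]
    exact (measurableSet_le measurable_const measurable_fst).inter
      (measurableSet_le measurable_snd measurable_const)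
  have hEmeas : MeasurableSet E := measurableSet_Icc.prod measurableSet_Icc
  have hEvol : volume E ≠ ⊤ := (IsCompact.measure_lt_top (isCompact_Icc.prod isCompact_Icc)).ne
  have hSvol : volume S ≠ ⊤ := fun h =>
    hEvol (top_le_iff.1 (h ▸ measure_mono hSE))
  set φ : ℝ × ℝ → ℝ :=
    fun u => u.1 * |∑ k ∈ Finset.range (n + 1), cesaroA (δ - 1) (n - k) * DstarK k u| with hφ
  set ψ : ℝ × ℝ → ℝ := fun u => K / u.1 with hψ
  have hφmeas : Measurable φ := by
    apply Measurable.mul measurable_fst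
    apply Measurable.abs
    apply Finset.measurable_sum
    intro k _
    apply Measurable.const_mul
    unfold DstarK
    fun_prop
  have hψmeas : Measurable ψ := measurable_const.div measurable_fst
  -- pointwise bound on S
  have hpoint : ∀ u ∈ S, φ u ≤ ψ u := by
    rintro ⟨x, y⟩ ⟨⟨hy0, hy3, _, hx1⟩, hxa, _⟩
    have hx0 : 0 < x := lt_of_lt_of_le ha0 hxa
    have hb := sum_bound h0 h1 n x y hx0 hx1 hy0 hy3
    have : φ (x, y) ≤ x * (K / x ^ 2) := by
      exact mul_le_mul_of_nonneg_left hb hx0.le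
    refine this.trans (le_of_eq ?_)
    rw [hψ]
    field_simp
  have hψboundE : ∀ u ∈ E, ψ u ≤ K * ((n:ℝ) + 1) := by
    rintro ⟨x, y⟩ ⟨⟨hxa, hx1⟩, _⟩
    have hx0 : 0 < x := lt_of_lt_of_le ha0 hxa
    have : K / x ≤ K / a := by
      apply div_le_div_of_nonneg_left hK0.le ha0 hxa
    refine this.trans (le_of_eq ?_)
    rw [ha]
    field_simp
  have hψnonnegE : ∀ u ∈ E, 0 ≤ ψ u := by
    rintro ⟨x, y⟩ ⟨⟨hxa, _⟩, _⟩
    have hx0 : 0 < x := lt_of_lt_of_le ha0 hxa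
    positivity
  have hψintE : IntegrableOn ψ E := by
    apply Measure.integrableOn_of_bounded hEvol hψmeas.aestronglyMeasurable
      (M := K * ((n:ℝ) + 1))
    rw [ae_restrict_iff' hEmeas]
    filter_upwards with u hu
    rw [Real.norm_eq_abs, abs_of_nonneg (hψnonnegE u hu)]
    exact hψboundE u hu
  have hψintS : IntegrableOn ψ S := hψintE.mono_set hSE
  have hφintS : IntegrableOn φ S := by
    apply Measure.integrableOn_of_bounded hSvol hφmeas.aestronglyMeasurable
      (M := K * ((n:ℝ) + 1))
    rw [ae_restrict_iff' hSmeas]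
    filter_upwards with u hu
    rw [Real.norm_eq_abs, abs_of_nonneg (by
      exact mul_nonneg (le_trans ha0.le hu.2.1) (abs_nonneg _))]
    exact (hpoint u hu).trans (hψboundE u (hSE hu))
  -- chain of integral bounds
  have h1le : ∫ u in S, φ u ≤ ∫ u in S, ψ u :=
    setIntegral_mono_on hφintS hψintS hSmeas hpoint
  have h2le : ∫ u in S, ψ u ≤ ∫ u in E, ψ u := by
    apply setIntegral_mono_set hψintE
    · refine (ae_restrict_iff' hEmeas).2 ?_
      filter_upwards with u hu
      exact hψnonnegE u hu
    · exact HasSubset.Subset.eventuallyLE hSE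
  have hcalc : ∫ u in E, ψ u = 4 * Real.pi * Real.log ((n : ℝ) + 1) := by
    have hψintE' : IntegrableOn ψ (Set.Icc a 1 ×ˢ Set.Icc (0:ℝ) c) (volume.prod volume) := by
      rw [← MeasureTheory.Measure.volume_eq_prod]
      exact hψintE
    rw [hE, MeasureTheory.Measure.volume_eq_prod, MeasureTheory.setIntegral_prod _ hψintE']
    have hinner : ∀ x : ℝ, (∫ y in Set.Icc (0:ℝ) c, ψ (x, y)) = c * (K / x) := by
      intro x
      rw [show (fun y => ψ (x, y)) = fun _ => K / x from rfl]
      rw [MeasureTheory.setIntegral_const, measureReal_def, Real.volume_Icc, smul_eq_mul, sub_zero,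
        ENNReal.toReal_ofReal hc0.le]
    simp_rw [hinner]
    have hfun : ∀ x : ℝ, c * (K / x) = (c * K) * (1 / x) := fun x => by ring
    simp_rw [hfun]
    rw [MeasureTheory.integral_Icc_eq_integral_Ioc,
      ← intervalIntegral.integral_of_le ha1,
      intervalIntegral.integral_const_mul,
      integral_one_div (by
        intro hmem
        rw [Set.mem_uIcc] at hmem
        rcases hmem with ⟨h', _⟩ | ⟨_, h'⟩ <;> linarith)]
    rw [ha, one_div_one_div, hc, hK]
    have h3 : (3 : ℝ) * ((n:ℝ) + 1) ≠ 0 := by positivity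
    field_simp
    ring
  -- final assembly
  have hA : ((n : ℝ) + 1) ^ δ ≤ cesaroA δ n := cesaro_lower h0.le h1.le n
  have hrpos : (0:ℝ) < ((n : ℝ) + 1) ^ δ := Real.rpow_pos_of_pos hn1 δ
  have hApos : 0 < cesaroA δ n := lt_of_lt_of_le hrpos hA
  have hI0 : 0 ≤ ∫ u in S, φ u := by
    apply setIntegral_nonneg hSmeas
    intro u hu
    exact mul_nonneg (le_trans ha0.le hu.2.1) (abs_nonneg _)
  have hIle : ∫ u in S, φ u ≤ 4 * Real.pi * Real.log ((n : ℝ) + 1) :=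
    h1le.trans (h2le.trans_eq hcalc)
  have hlog : 0 ≤ Real.log ((n : ℝ) + 1) := Real.log_nonneg hn2
  have hgoal : (1 / cesaroA δ n) * ∫ u in S, φ u ≤
      4 * Real.pi * (Real.log ((n : ℝ) + 1) / ((n : ℝ) + 1) ^ δ) := by
    calc (1 / cesaroA δ n) * ∫ u in S, φ u
        ≤ (1 / cesaroA δ n) * (4 * Real.pi * Real.log ((n : ℝ) + 1)) :=
          mul_le_mul_of_nonneg_left hIle (by positivity)
      _ ≤ (1 / ((n : ℝ) + 1) ^ δ) * (4 * Real.pi * Real.log ((n : ℝ) + 1)) := by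
          apply mul_le_mul_of_nonneg_right _ (by positivity)
          exact one_div_le_one_div_of_le hrpos hA
      _ = 4 * Real.pi * (Real.log ((n : ℝ) + 1) / ((n : ℝ) + 1) ^ δ) := by ring
  convert hgoal using 2
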